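/- A set A ⊆ F_2^r is a generic (r,r)-erasure correcting set of minimum size 2^{r−1} if and only if F_2^r \ A is an (r−1)-dimensional linear subspace (hyperplane) of F_2^r. In particular F(r,r) = 2^{r−1}. -/

import Mathlib

open Matrix

/-- Hamming weight of a binary vector. -/
def wt {n : ℕ} (v : Fin n → ZMod 2) : ℕ :=
  (Finset.univ.filter (fun j => v j ≠ 0)).card

/-- `A` is a generic `(r,m)`-erasure reducing set. -/
def GenRed (r m : ℕ) (A : Set (Fin r → ZMod 2)) : Prop :=
  ∀ M : Matrix (Fin r) (Fin m) (ZMod 2), M.rank = m →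
    ∃ a ∈ A, wt (Matrix.vecMul a M) = 1

/-- `A` is a generic `(r,m)`-erasure correcting set. -/
def GenCor (r m : ℕ) (A : Set (Fin r → ZMod 2)) : Prop :=
  ∀ m', 1 ≤ m' → m' ≤ m → GenRed r m' A

/-- `F(r,m)`: the minimum size of a generic `(r,m)`-erasure correcting set. -/
noncomputable def Fmin (r m : ℕ) : ℕ :=
  sInf {k | ∃ A : Finset (Fin r → ZMod 2), A.card = k ∧ GenCor r m ↑A}

lemma wt_single {n : ℕ} (j : Fin n) : wt (Pi.single j (1 : ZMod 2)) = 1 := by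
  unfold wt
  rw [Finset.card_eq_one]
  refine ⟨j, ?_⟩
  ext k
  by_cases h : k = j <;> simp [Pi.single_apply, h]

lemma eq_single_of_wt_eq_one {n : ℕ} {v : Fin n → ZMod 2} (h : wt v = 1) :
    ∃ j : Fin n, v = Pi.single j (1 : ZMod 2) := by
  unfold wt at h
  rw [Finset.card_eq_one] at h
  obtain ⟨j, hj⟩ := h
  have hmem : ∀ k, v k ≠ 0 ↔ k = j := by
    intro k
    constructor
    · intro hk
      have : k ∈ Finset.univ.filter (fun j => v j ≠ 0) := by simp [hk]
      rw [hj] at this; simpa using this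
    · intro hk
      have : j ∈ Finset.univ.filter (fun j => v j ≠ 0) := by rw [hj]; simp
      subst hk; simpa using this
  have h1 : ∀ x : ZMod 2, x ≠ 0 → x = 1 := by decide
  refine ⟨j, funext fun k => ?_⟩
  by_cases hk : k = j
  · subst hk
    rw [Pi.single_eq_same]
    exact h1 _ ((hmem k).mpr rfl)
  · rw [Pi.single_eq_of_ne hk]
    by_contra hc
    exact hk ((hmem k).mp hc)

lemma hyperplane_genCor {r : ℕ} (hr : 1 ≤ r) (W : Submodule (ZMod 2) (Fin r → ZMod 2))
    (hW : Module.finrank (ZMod 2) W = r - 1) : GenCor r r ((W : Set (Fin r → ZMod 2))ᶜ) := by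
  intro m' hm1 _ M hrank
  by_contra hcon
  push_neg at hcon
  have hmem : ∀ a, wt (a ᵥ* M) = 1 → a ∈ W := by
    intro a ha
    by_contra hc
    exact hcon a hc ha
  -- vecMul by M is surjective
  have hrange : LinearMap.range M.vecMulLinear = ⊤ := by
    apply Submodule.eq_top_of_finrank_eq
    rw [range_vecMulLinear, ← Matrix.rank_eq_finrank_span_row, hrank,
      Module.finrank_fin_fun]
  have hsurj : ∀ v : Fin m' → ZMod 2, ∃ a, a ᵥ* M = v := by
    intro v
    have : v ∈ LinearMap.range M.vecMulLinear := by rw [hrange]; trivial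
    obtain ⟨a, ha⟩ := this
    exact ⟨a, ha⟩
  choose a ha using fun j : Fin m' => hsurj (Pi.single j 1)
  have haW : ∀ j, a j ∈ W := fun j => hmem _ (by rw [ha]; exact wt_single j)
  set j0 : Fin m' := ⟨0, hm1⟩
  have hker : ∀ k : Fin r → ZMod 2, k ᵥ* M = 0 → k ∈ W := by
    intro k hk
    have h1 : (a j0 + k) ᵥ* M = Pi.single j0 1 := by
      rw [Matrix.add_vecMul, ha, hk, add_zero]
    have h2 : a j0 + k ∈ W := hmem _ (by rw [h1]; exact wt_single j0)
    have h3 := W.sub_mem h2 (haW j0)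
    simpa using h3
  have htop : ∀ x : Fin r → ZMod 2, x ∈ W := by
    intro x
    set y := ∑ j, (x ᵥ* M) j • a j with hy
    have hyW : y ∈ W := Submodule.sum_mem _ fun j _ => W.smul_mem _ (haW j)
    have hfy : y ᵥ* M = x ᵥ* M := by
      have h4 : M.vecMulLinear y = ∑ j, (x ᵥ* M) j • M.vecMulLinear (a j) := by
        rw [hy, map_sum]
        simp only [_root_.map_smul]
      simp only [Matrix.vecMulLinear_apply] at h4
      rw [h4]
      simp_rw [ha, ← Pi.single_smul, smul_eq_mul, mul_one, Finset.univ_sum_single]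
    have hd : x - y ∈ W := hker _ (by rw [Matrix.sub_vecMul, hfy, sub_self])
    have := W.add_mem hyW hd
    simpa using this
  have hWtop : W = ⊤ := eq_top_iff.mpr fun x _ => htop x
  rw [hWtop, finrank_top, Module.finrank_fin_fun] at hW
  omega

lemma ncard_subspace {r : ℕ} (W : Submodule (ZMod 2) (Fin r → ZMod 2)) :
    (W : Set (Fin r → ZMod 2)).ncard = 2 ^ (Module.finrank (ZMod 2) W) := by
  haveI : Fintype W := Fintype.ofFinite W
  rw [← Nat.card_coe_set_eq, Nat.card_eq_fintype_card]
  have := Module.card_eq_pow_finrank (K := ZMod 2) (V := W)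
  rwa [ZMod.card] at this

lemma card_total {r : ℕ} : Nat.card (Fin r → ZMod 2) = 2 ^ r := by
  simp [Nat.card_eq_fintype_card]

lemma span_compl_ne_top {r : ℕ} {A : Set (Fin r → ZMod 2)} (hr : 1 ≤ r)
    (hA : GenRed r r A) : Submodule.span (ZMod 2) Aᶜ ≠ ⊤ := by
  intro htop
  obtain ⟨b, hbsub, hbspan, hbli⟩ := exists_linearIndependent (ZMod 2) Aᶜ
  rw [htop] at hbspan
  haveI : Fintype ↥b := Fintype.ofFinite _
  let c : Module.Basis ↥b (ZMod 2) (Fin r → ZMod 2) :=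
    Module.Basis.mk hbli (by rw [Subtype.range_coe, hbspan])
  have hbcard : Fintype.card ↥b = r := by
    rw [← Module.finrank_eq_card_basis c, Module.finrank_fin_fun]
  let e : Fin r ≃ ↥b := (Fintype.equivFinOfCardEq hbcard).symm
  let c' : Module.Basis (Fin r) (ZMod 2) (Fin r → ZMod 2) := c.reindex e.symm
  let B : Matrix (Fin r) (Fin r) (ZMod 2) := Matrix.of fun i j => (c' i) j
  have hBt : Bᵀ = (Pi.basisFun (ZMod 2) (Fin r)).toMatrix c' := by
    ext i j
    simp [Module.Basis.toMatrix_apply, B, Matrix.transpose_apply]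
  haveI : Invertible Bᵀ := by
    rw [hBt]
    exact (Pi.basisFun (ZMod 2) (Fin r)).invertibleToMatrix c'
  haveI : Invertible B := B.invertibleOfInvertibleTranspose
  set M := ⅟B with hM
  have hMrank : M.rank = r := by
    have := Matrix.rank_of_isUnit M (isUnit_of_invertible M)
    simpa using this
  obtain ⟨av, haA, hawt⟩ := hA M hMrank
  obtain ⟨j, hj⟩ := eq_single_of_wt_eq_one hawt
  have h1 : (av ᵥ* M) ᵥ* B = (Pi.single j 1) ᵥ* B := by rw [hj]
  rw [Matrix.vecMul_vecMul, hM, invOf_mul_self, Matrix.vecMul_one,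
    Matrix.single_one_vecMul j B] at h1
  -- h1 : av = B j
  have hBj : B j = c' j := rfl
  have hc'j : c' j ∈ b := by
    have : c' j = c (e j) := by
      simp [c', Module.Basis.reindex_apply]
    rw [this]
    have : c (e j) = ((e j : ↥b) : Fin r → ZMod 2) := by
      simp [c, Module.Basis.mk_apply]
    rw [this]
    exact (e j).2
  have : av ∈ Aᶜ := by
    rw [h1, show B.row j = c' j from rfl]
    exact hbsub hc'j
  exact this haA

lemma genRed_card_lower {r : ℕ} {A : Set (Fin r → ZMod 2)} (hr : 1 ≤ r)
    (hA : GenRed r r A) : 2 ^ (r - 1) ≤ A.ncard ∧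
      (A.ncard = 2 ^ (r - 1) →
        ∃ W : Submodule (ZMod 2) (Fin r → ZMod 2),
          Module.finrank (ZMod 2) W = r - 1 ∧ (W : Set (Fin r → ZMod 2)) = Aᶜ) := by
  set W0 := Submodule.span (ZMod 2) Aᶜ with hW0
  have hne : W0 ≠ ⊤ := span_compl_ne_top hr hA
  have hlt : Module.finrank (ZMod 2) W0 < r := by
    have := Submodule.finrank_lt (K := ZMod 2) (V := Fin r → ZMod 2)
      hne
    rwa [Module.finrank_fin_fun] at this
  have hsub : Aᶜ ⊆ (W0 : Set (Fin r → ZMod 2)) := Submodule.subset_span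
  have hW0card : (W0 : Set (Fin r → ZMod 2)).ncard = 2 ^ (Module.finrank (ZMod 2) W0) :=
    ncard_subspace W0
  have hW0le : (W0 : Set (Fin r → ZMod 2)).ncard ≤ 2 ^ (r - 1) := by
    rw [hW0card]
    exact Nat.pow_le_pow_right (by norm_num) (by omega)
  have hAc_le : Aᶜ.ncard ≤ 2 ^ (r - 1) :=
    le_trans (Set.ncard_le_ncard hsub (Set.toFinite _)) hW0le
  have hsum : A.ncard + Aᶜ.ncard = 2 ^ r := by
    rw [Set.ncard_add_ncard_compl, card_total]
  have hpow : 2 ^ r = 2 * 2 ^ (r - 1) := by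
    rw [← pow_succ']
    congr 1
    omega
  constructor
  · omega
  · intro hcard
    have hAc : Aᶜ.ncard = 2 ^ (r - 1) := by omega
    have hle2 : (W0 : Set (Fin r → ZMod 2)).ncard ≤ Aᶜ.ncard := by omega
    have heq : Aᶜ = (W0 : Set (Fin r → ZMod 2)) :=
      Set.eq_of_subset_of_ncard_le hsub hle2 (Set.toFinite _)
    refine ⟨W0, ?_, heq.symm⟩
    have : (2 : ℕ) ^ (Module.finrank (ZMod 2) W0) = 2 ^ (r - 1) := by
      rw [← hW0card, ← heq, hAc]
    exact Nat.pow_right_injective (le_refl 2) this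

lemma ncard_compl_hyperplane {r : ℕ} (hr : 1 ≤ r)
    (W : Submodule (ZMod 2) (Fin r → ZMod 2))
    (hW : Module.finrank (ZMod 2) W = r - 1) :
    ((W : Set (Fin r → ZMod 2))ᶜ).ncard = 2 ^ (r - 1) := by
  have hsum : (W : Set (Fin r → ZMod 2)).ncard + ((W : Set (Fin r → ZMod 2))ᶜ).ncard = 2 ^ r := by
    rw [Set.ncard_add_ncard_compl, card_total]
  rw [ncard_subspace, hW] at hsum
  have hpow : 2 ^ r = 2 * 2 ^ (r - 1) := by
    rw [← pow_succ']
    congr 1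
    omega
  omega

theorem stmt_15 (r : ℕ) (hr : 1 ≤ r) :
    (∀ A : Set (Fin r → ZMod 2),
      (GenCor r r A ∧ A.ncard = 2 ^ (r - 1)) ↔
        ∃ W : Submodule (ZMod 2) (Fin r → ZMod 2),
          Module.finrank (ZMod 2) W = r - 1 ∧ (W : Set (Fin r → ZMod 2)) = Aᶜ) ∧
    Fmin r r = 2 ^ (r - 1) := by
  have hiff : ∀ A : Set (Fin r → ZMod 2),
      (GenCor r r A ∧ A.ncard = 2 ^ (r - 1)) ↔
        ∃ W : Submodule (ZMod 2) (Fin r → ZMod 2),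
          Module.finrank (ZMod 2) W = r - 1 ∧ (W : Set (Fin r → ZMod 2)) = Aᶜ := by
    intro A
    constructor
    · rintro ⟨hcor, hcard⟩
      exact (genRed_card_lower hr (hcor r hr le_rfl)).2 hcard
    · rintro ⟨W, hWrank, hWeq⟩
      have hAeq : A = (W : Set (Fin r → ZMod 2))ᶜ := by
        rw [hWeq, compl_compl]
      constructor
      · rw [hAeq]
        exact hyperplane_genCor hr W hWrank
      · rw [hAeq]
        exact ncard_compl_hyperplane hr W hWrank
  refine ⟨hiff, ?_⟩
  -- construct a concrete hyperplane
  set φ : (Fin r → ZMod 2) →ₗ[ZMod 2] ZMod 2 := LinearMap.proj (⟨0, hr⟩ : Fin r) with hφ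
  have hsurj : Function.Surjective φ := fun c => ⟨fun _ => c, rfl⟩
  have hker : Module.finrank (ZMod 2) (LinearMap.ker φ) = r - 1 := by
    have h1 := LinearMap.finrank_range_add_finrank_ker φ
    rw [LinearMap.range_eq_top.mpr hsurj, finrank_top, Module.finrank_self,
      Module.finrank_fin_fun] at h1
    omega
  set W : Submodule (ZMod 2) (Fin r → ZMod 2) := LinearMap.ker φ
  set A : Set (Fin r → ZMod 2) := (W : Set (Fin r → ZMod 2))ᶜ with hA
  have hApair : GenCor r r A ∧ A.ncard = 2 ^ (r - 1) := by
    rw [hiff]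
    exact ⟨W, hker, by rw [hA, compl_compl]⟩
  -- membership in the Fmin set
  have hmem : 2 ^ (r - 1) ∈
      {k | ∃ F : Finset (Fin r → ZMod 2), F.card = k ∧ GenCor r r ↑F} := by
    refine ⟨(Set.toFinite A).toFinset, ?_, ?_⟩
    · rw [← Set.ncard_eq_toFinset_card A (Set.toFinite A)]
      exact hApair.2
    · rw [Set.Finite.coe_toFinset]
      exact hApair.1
  apply le_antisymm
  · exact Nat.sInf_le hmem
  · apply le_csInf ⟨_, hmem⟩
    rintro k ⟨F, hFcard, hFcor⟩
    have := (genRed_card_lower hr (hFcor r hr le_rfl)).1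
    rwa [Set.ncard_coe_finset, hFcard] at this
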